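/- Let A and B be at most countable ω-categorical relational structures. Then B can be pp-constructed from A if and only if B is homomorphically equivalent to a pp-power of A. -/

import Mathlib

/-! ### Relational structures, pp-formulas, pp-powers -/

/-- A relational structure with signature `σ` (arities given by `ar`) on domain `D`. -/
structure RelStruct (σ : Type) (ar : σ → ℕ) (D : Type) where
  rel : ∀ s : σ, (Fin (ar s) → D) → Prop

section Rel

variable {σ : Type} {ar : σ → ℕ} {τ : Type} {br : τ → ℕ} {D E : Type}

/-- `h` is a homomorphism between two relational structures in the same signature. -/
def IsHomOf (SA : RelStruct σ ar D) (SB : RelStruct σ ar E) (h : D → E) : Prop :=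
  ∀ s t, SA.rel s t → SB.rel s (fun i => h (t i))

/-- Homomorphic equivalence of relational structures in the same signature. -/
def HomEquiv (SA : RelStruct σ ar D) (SB : RelStruct σ ar E) : Prop :=
  (∃ h, IsHomOf SA SB h) ∧ (∃ h, IsHomOf SB SA h)

/-- An automorphism of a relational structure. -/
def IsAutomorphism (S : RelStruct σ ar D) (g : D ≃ D) : Prop :=
  IsHomOf S S g ∧ IsHomOf S S g.symm

/-- ω-categoricity (for at most countable structures): for every `n` the componentwise
action of the automorphism group on `n`-tuples has finitely many orbits. -/
def OmegaCategorical (S : RelStruct σ ar D) : Prop :=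
  ∀ n : ℕ, Set.Finite { O : Set (Fin n → D) | ∃ t : Fin n → D,
    O = { u | ∃ g : D ≃ D, IsAutomorphism S g ∧ (fun i => g (t i)) = u } }

/-- A model-complete core: automorphisms are dense in endomorphisms. -/
def ModelCompleteCore (S : RelStruct σ ar D) : Prop :=
  ∀ e : D → D, IsHomOf S S e → ∀ F : Set D, F.Finite →
    ∃ g : D ≃ D, IsAutomorphism S g ∧ ∀ x ∈ F, g x = e x

/-- Primitive positive formulas over signature `(σ, ar)` with free variables of type `V`. -/
inductive PPFormula (σ : Type) (ar : σ → ℕ) : Type → Type 1 where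
  | rel {V : Type} (s : σ) (t : Fin (ar s) → V) : PPFormula σ ar V
  | eq {V : Type} (x y : V) : PPFormula σ ar V
  | and {V : Type} (φ ψ : PPFormula σ ar V) : PPFormula σ ar V
  | ex {V : Type} (φ : PPFormula σ ar (Option V)) : PPFormula σ ar V

/-- Satisfaction of a pp-formula under an assignment of the free variables. -/
def PPFormula.Sat (S : RelStruct σ ar D) : {V : Type} → PPFormula σ ar V → (V → D) → Prop
  | _, .rel s t, v => S.rel s (fun i => v (t i))
  | _, .eq x y, v => v x = v y
  | _, .and φ ψ, v => PPFormula.Sat S φ v ∧ PPFormula.Sat S ψ v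
  | _, .ex φ, v => ∃ d : D, PPFormula.Sat S φ (fun o => Option.elim o d v)

/-- A relation (with coordinates indexed by `V`) is pp-definable in `S`. -/
def PpDefinable (S : RelStruct σ ar D) {V : Type} (R : (V → D) → Prop) : Prop :=
  ∃ φ : PPFormula σ ar V, ∀ v, R v ↔ PPFormula.Sat S φ v

/-- `SB` is a pp-power of `SA`: `SB` is isomorphic to a structure with domain `D^n`
(`n ≥ 1`) whose relations, regarded as relations on `D` of `n`-fold arity,
are pp-definable in `SA`. -/
def IsPpPower (SA : RelStruct σ ar D) (SB : RelStruct τ br E) : Prop :=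
  ∃ n : ℕ, 0 < n ∧ ∃ e : E ≃ (Fin n → D),
    ∀ s : τ, PpDefinable SA (fun v : Fin (br s) × Fin n → D =>
      SB.rel s (fun j => e.symm (fun i => v (j, i))))

/-- `SB` is homomorphically equivalent to a pp-power of `SA`. -/
def HomEqPpPower (SA : RelStruct σ ar D) (SB : RelStruct τ br E) : Prop :=
  ∃ (C : Type) (SC : RelStruct τ br C), IsPpPower SA SC ∧ HomEquiv SB SC

end Rel

/-! ### Function clones (all operations have arity ≥ 1; arity index `n` means arity `n+1`) -/

/-- A set of finitary operations on `A`, where `C n` collects the `(n+1)`-ary members. -/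
def OpSet (A : Type) := ∀ n : ℕ, Set ((Fin (n+1) → A) → A)

section Clone

variable {A B : Type}

/-- A function clone: contains all projections and is closed under composition. -/
structure IsClone (C : OpSet A) : Prop where
  proj : ∀ (n : ℕ) (i : Fin (n+1)), (fun t => t i) ∈ C n
  comp : ∀ (n m : ℕ) (f : (Fin (n+1) → A) → A) (g : Fin (n+1) → ((Fin (m+1) → A) → A)),
    f ∈ C n → (∀ i, g i ∈ C m) → (fun t => f (fun i => g i t)) ∈ C m

/-- An arity-preserving assignment of operations on `B` to operations on `A`. -/
def CloneMap (A B : Type) := ∀ n : ℕ, ((Fin (n+1) → A) → A) → ((Fin (n+1) → B) → B)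

/-- `ξ` maps the members of `CA` to members of `CB`. -/
def MapsCloneInto (CA : OpSet A) (CB : OpSet B) (ξ : CloneMap A B) : Prop :=
  ∀ n f, f ∈ CA n → ξ n f ∈ CB n

/-- `ξ` preserves identities of height 1: it preserves taking minors (compositions
with projections). -/
def PreservesH1 (CA : OpSet A) (ξ : CloneMap A B) : Prop :=
  ∀ (n m : ℕ) (f : (Fin (n+1) → A) → A), f ∈ CA n → ∀ p : Fin (n+1) → Fin (m+1),
    ξ m (fun t => f (fun i => t (p i))) = fun t => ξ n f (fun i => t (p i))

/-- An h1 clone homomorphism from `CA` to `CB`. -/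
def IsH1Hom (CA : OpSet A) (CB : OpSet B) (ξ : CloneMap A B) : Prop :=
  MapsCloneInto CA CB ξ ∧ PreservesH1 CA ξ

/-- `ξ` sends every projection to the same projection. -/
def PreservesProj (ξ : CloneMap A B) : Prop :=
  ∀ (n : ℕ) (i : Fin (n+1)), ξ n (fun t => t i) = fun t => t i

/-- A strong h1 clone homomorphism: an h1 clone homomorphism preserving projections. -/
def IsStrongH1Hom (CA : OpSet A) (CB : OpSet B) (ξ : CloneMap A B) : Prop :=
  IsH1Hom CA CB ξ ∧ PreservesProj ξ

/-- A clone homomorphism: preserves projections and composition. -/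
def IsCloneHom (CA : OpSet A) (CB : OpSet B) (ξ : CloneMap A B) : Prop :=
  MapsCloneInto CA CB ξ ∧ PreservesProj ξ ∧
    ∀ (n m : ℕ) (f : (Fin (n+1) → A) → A) (g : Fin (n+1) → ((Fin (m+1) → A) → A)),
      f ∈ CA n → (∀ i, g i ∈ CA m) →
      ξ m (fun t => f (fun i => g i t)) = fun t => ξ n f (fun i => ξ m (g i) t)

/-- Uniform continuity of a map between function clones. -/
def UniformlyCont (CA : OpSet A) (ξ : CloneMap A B) : Prop :=
  ∀ Bf : Set B, Bf.Finite → ∃ Af : Set A, Af.Finite ∧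
    ∀ (n : ℕ) (f g : (Fin (n+1) → A) → A), f ∈ CA n → g ∈ CA n →
      (∀ t : Fin (n+1) → A, (∀ i, t i ∈ Af) → f t = g t) →
      ∀ u : Fin (n+1) → B, (∀ i, u i ∈ Bf) → ξ n f u = ξ n g u

/-- Continuity of a map between function clones (pointwise convergence topology). -/
def ContinuousCloneMap (CA : OpSet A) (ξ : CloneMap A B) : Prop :=
  ∀ (n : ℕ) (f : (Fin (n+1) → A) → A), f ∈ CA n → ∀ Bf : Set B, Bf.Finite →
    ∃ Af : Set A, Af.Finite ∧
      ∀ g, g ∈ CA n → (∀ t : Fin (n+1) → A, (∀ i, t i ∈ Af) → f t = g t) →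
        ∀ u : Fin (n+1) → B, (∀ i, u i ∈ Bf) → ξ n f u = ξ n g u

/-- `CB ∈ E Tra 𝒜`: some reflection of `CA` is contained in `CB`. -/
def InETra (CA : OpSet A) (CB : OpSet B) : Prop :=
  ∃ (h1 : B → A) (h2 : A → B), ∀ n f, f ∈ CA n →
    (fun t : Fin (n+1) → B => h2 (f (fun i => h1 (t i)))) ∈ CB n

/-- `CB ∈ E Tra Pfin 𝒜`: some reflection of a finite power of `CA` is contained in `CB`. -/
def InETraPfin (CA : OpSet A) (CB : OpSet B) : Prop :=
  ∃ (m : ℕ) (h1 : B → (Fin m → A)) (h2 : (Fin m → A) → B),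
    ∀ n f, f ∈ CA n →
      (fun u : Fin (n+1) → B => h2 (fun j => f (fun i => h1 (u i) j))) ∈ CB n

/-- `CB ∈ E Tra P 𝒜`: some reflection of a power of `CA` is contained in `CB`. -/
def InETraP (CA : OpSet A) (CB : OpSet B) : Prop :=
  ∃ (I : Type) (h1 : B → (I → A)) (h2 : (I → A) → B),
    ∀ n f, f ∈ CA n →
      (fun u : Fin (n+1) → B => h2 (fun j => f (fun i => h1 (u i) j))) ∈ CB n

/-- `CB ∈ E Ret Pfin 𝒜`. -/
def InERetPfin (CA : OpSet A) (CB : OpSet B) : Prop :=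
  ∃ (m : ℕ) (h1 : B → (Fin m → A)) (h2 : (Fin m → A) → B),
    (∀ b, h2 (h1 b) = b) ∧
    ∀ n f, f ∈ CA n →
      (fun u : Fin (n+1) → B => h2 (fun j => f (fun i => h1 (u i) j))) ∈ CB n

/-- `CB ∈ E Ret P 𝒜`. -/
def InERetP (CA : OpSet A) (CB : OpSet B) : Prop :=
  ∃ (I : Type) (h1 : B → (I → A)) (h2 : (I → A) → B),
    (∀ b, h2 (h1 b) = b) ∧
    ∀ n f, f ∈ CA n →
      (fun u : Fin (n+1) → B => h2 (fun j => f (fun i => h1 (u i) j))) ∈ CB n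

/-- `CB ∈ E H S Pfin 𝒜`: `CB` contains the clone obtained from some finite power of `CA`
by restricting to an invariant subset and taking the quotient action along a surjection. -/
def InEHSPfin (CA : OpSet A) (CB : OpSet B) : Prop :=
  ∃ (m : ℕ) (S : Set (Fin m → A)) (h : (Fin m → A) → B),
    (∀ (n : ℕ) (f : (Fin (n+1) → A) → A), f ∈ CA n →
      ∀ t : Fin (n+1) → (Fin m → A), (∀ i, t i ∈ S) → (fun j => f (fun i => t i j)) ∈ S) ∧
    (∀ b : B, ∃ x ∈ S, h x = b) ∧
    (∀ (n : ℕ) (f : (Fin (n+1) → A) → A), f ∈ CA n → ∃ f' ∈ CB n,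
      ∀ t : Fin (n+1) → (Fin m → A), (∀ i, t i ∈ S) →
        h (fun j => f (fun i => t i j)) = f' (fun i => h (t i)))

end Clone

section Pol

variable {σ : Type} {ar : σ → ℕ} {D : Type}

/-- The polymorphism clone of a relational structure. -/
def Pol (S : RelStruct σ ar D) : OpSet D :=
  fun n => { f | ∀ (s : σ) (ts : Fin (n+1) → (Fin (ar s) → D)),
    (∀ i, S.rel s (ts i)) → S.rel s (fun j => f (fun i => ts i j)) }

end Pol

/-! ### pp-interpretations and bundled relational structures -/

section PpInt

variable {σ : Type} {ar : σ → ℕ} {τ : Type} {br : τ → ℕ} {D E : Type}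

/-- `SA` pp-interprets `SB`: there are `n ≥ 1` and a surjective partial map
`h : D^n → E` whose domain, the preimage of equality, and the preimages of all
relations of `SB` are pp-definable in `SA`. -/
def PpInterprets (SA : RelStruct σ ar D) (SB : RelStruct τ br E) : Prop :=
  ∃ n : ℕ, 0 < n ∧ ∃ (Dom : Set (Fin n → D)) (h : (Fin n → D) → E),
    (∀ b : E, ∃ x ∈ Dom, h x = b) ∧
    PpDefinable SA (fun v : Fin n → D => v ∈ Dom) ∧
    PpDefinable SA (fun v : Fin 2 × Fin n → D =>
      (fun i => v (0, i)) ∈ Dom ∧ (fun i => v (1, i)) ∈ Dom ∧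
        h (fun i => v (0, i)) = h (fun i => v (1, i))) ∧
    ∀ s : τ, PpDefinable SA (fun v : Fin (br s) × Fin n → D =>
      (∀ j, (fun i => v (j, i)) ∈ Dom) ∧ SB.rel s (fun j => h (fun i => v (j, i))))

end PpInt

/-- A bundled relational structure (signature and domain included). -/
structure BStr : Type 1 where
  ι : Type
  ar : ι → ℕ
  D : Type
  str : RelStruct ι ar D

namespace BStr

/-- A homomorphism between bundled structures, along a renaming `e` of the signature
(preserving arities, witnessed by `har`). -/
def HomVia (A B : BStr) (e : A.ι → B.ι) (har : ∀ s, B.ar (e s) = A.ar s)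
    (h : A.D → B.D) : Prop :=
  ∀ s t, A.str.rel s t → B.str.rel (e s) (fun i => h (t (Fin.cast (har s) i)))

/-- Homomorphic equivalence of bundled structures (up to renaming of the signature). -/
def HomEquivB (A B : BStr) : Prop :=
  ∃ (e : A.ι ≃ B.ι) (har : ∀ s, B.ar (e s) = A.ar s)
    (har' : ∀ s, A.ar (e.symm s) = B.ar s),
    (∃ h, HomVia A B e har h) ∧ (∃ h, HomVia B A e.symm har' h)

/-- `HomEq K`: structures homomorphically equivalent to a member of `K`. -/
def HomEq (K : Set BStr) : Set BStr := { B | ∃ A ∈ K, HomEquivB A B }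

/-- `PpPower K`: pp-powers of members of `K`. -/
def PpPower (K : Set BStr) : Set BStr := { B | ∃ A ∈ K, IsPpPower A.str B.str }

/-- `PpInt K`: structures pp-interpretable in some member of `K`. -/
def PpInt (K : Set BStr) : Set BStr := { B | ∃ A ∈ K, PpInterprets A.str B.str }

end BStr

namespace BStr

/-- `B` is obtained from `A` by adding a singleton unary relation (up to renaming of
the signature and of the domain): the signature of `B` is that of `A` together with
one new unary symbol, the old symbols denote the same relations, and the new symbol
denotes a singleton `{s₀}`. -/
def AddSingletonB (A B : BStr) : Prop :=
  ∃ (e : Option A.ι ≃ B.ι) (d : A.D ≃ B.D)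
    (hars : ∀ s : A.ι, B.ar (e (some s)) = A.ar s) (_ : B.ar (e none) = 1),
    (∀ (s : A.ι) (t : Fin (B.ar (e (some s))) → B.D),
      B.str.rel (e (some s)) t ↔
        A.str.rel s (fun i => d.symm (t (Fin.cast (hars s).symm i)))) ∧
    ∃ s₀ : B.D, ∀ t : Fin (B.ar (e none)) → B.D, B.str.rel (e none) t ↔ ∀ j, t j = s₀

/-- A single step in a pp-construction. -/
def PpStep (A B : BStr) : Prop :=
  PpInterprets A.str B.str ∨ HomEquivB A B ∨
    (Countable A.D ∧ OmegaCategorical A.str ∧ ModelCompleteCore A.str ∧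
      AddSingletonB A B)

/-- `B` can be pp-constructed from `A`: there is a finite sequence of structures from
`A` to `B` each step of which is a pp-interpretation, a homomorphic equivalence, or
the addition of a singleton unary relation to an at most countable ω-categorical
model-complete core. -/
def PpConstructible (A B : BStr) : Prop :=
  ∃ (k : ℕ) (Cs : Fin (k+1) → BStr), Cs 0 = A ∧ Cs (Fin.last k) = B ∧
    ∀ i : Fin k, PpStep (Cs i.castSucc) (Cs i.succ)

end BStr

/-! ### Auxiliary machinery for the proof -/

section PPMachinery

variable {σ : Type} {ar : σ → ℕ} {τ : Type} {br : τ → ℕ} {D E : Type}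

namespace PPFormula

/-- Renaming of variables in a pp-formula. -/
def rename : {V W : Type} → (V → W) → PPFormula σ ar V → PPFormula σ ar W
  | _, _, f, .rel s t => .rel s (fun i => f (t i))
  | _, _, f, .eq x y => .eq (f x) (f y)
  | _, _, f, .and φ ψ => .and (rename f φ) (rename f ψ)
  | _, _, f, .ex φ => .ex (rename (Option.map f) φ)

theorem sat_rename (S : RelStruct σ ar D) :
    ∀ {V W : Type} (f : V → W) (φ : PPFormula σ ar V) (v : W → D),
      (rename f φ).Sat S v ↔ φ.Sat S (fun x => v (f x))
  | _, _, f, .rel s t, v => Iff.rfl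
  | _, _, f, .eq x y, v => Iff.rfl
  | _, _, f, .and φ ψ, v => by
      simp only [rename, Sat, sat_rename]
  | _, _, f, .ex φ, v => by
      simp only [rename, Sat]
      refine exists_congr fun d => ?_
      rw [sat_rename]
      rw [show (fun x => Option.elim (Option.map f x) d v)
          = (fun o => Option.elim o d (fun x => v (f x))) from
        funext fun o => by cases o <;> rfl]

/-- A pp-formula that is satisfied iff the domain is nonempty. -/
def verum (V : Type) : PPFormula σ ar V := .ex (.eq none none)

theorem sat_verum (S : RelStruct σ ar D) (hD : Nonempty D) (v : V → D) :
    (verum (σ := σ) (ar := ar) V).Sat S v := by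
  obtain ⟨d⟩ := hD
  exact ⟨d, rfl⟩

/-- Finite conjunction of a list of pp-formulas, over a base formula. -/
def listAnd {V : Type} (base : PPFormula σ ar V) :
    List (PPFormula σ ar V) → PPFormula σ ar V
  | [] => base
  | φ :: l => .and φ (listAnd base l)

theorem sat_listAnd (S : RelStruct σ ar D) {V : Type} (base : PPFormula σ ar V)
    (l : List (PPFormula σ ar V)) (v : V → D) :
    (listAnd base l).Sat S v ↔ base.Sat S v ∧ ∀ φ ∈ l, φ.Sat S v := by
  induction l with
  | nil => simp [listAnd]
  | cons φ l ih => simp [listAnd, Sat, ih]; tauto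

/-- Satisfaction only depends on the values of the assignment. -/
theorem sat_congr {S : RelStruct σ ar D} {V : Type} {φ : PPFormula σ ar V}
    {v w : V → D} (hvw : ∀ x, v x = w x) (h : φ.Sat S v) : φ.Sat S w := by
  have : v = w := funext hvw
  exact this ▸ h

/-- pp-formulas are preserved by homomorphisms. -/
theorem sat_hom {SA : RelStruct σ ar D} {SB : RelStruct σ ar E} {h : D → E}
    (hh : IsHomOf SA SB h) :
    ∀ {V : Type} (φ : PPFormula σ ar V) (v : V → D),
      φ.Sat SA v → φ.Sat SB (fun x => h (v x))
  | _, .rel s t, v, hs => hh s _ hs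
  | _, .eq x y, v, hs => congrArg h hs
  | _, .and φ ψ, v, hs => ⟨sat_hom hh φ v hs.1, sat_hom hh ψ v hs.2⟩
  | _, .ex φ, v, hs => by
      obtain ⟨d, hd⟩ := hs
      refine show ∃ d', φ.Sat SB _ from ⟨h d, ?_⟩
      have := sat_hom hh φ _ hd
      refine sat_congr (fun o => ?_) this
      cases o <;> rfl

/-- Existential quantification over a block of `n` fresh variables. -/
def exFin : {V : Type} → (n : ℕ) → PPFormula σ ar (V ⊕ Fin n) → PPFormula σ ar V
  | _, 0, φ => rename (Sum.elim id Fin.elim0) φ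
  | _, n+1, φ => exFin n (.ex (rename
      (Sum.elim (fun x => some (Sum.inl x))
        (fun i => Fin.lastCases none (fun j => some (Sum.inr j)) i)) φ))

theorem sat_exFin (S : RelStruct σ ar D) :
    ∀ {V : Type} (n : ℕ) (φ : PPFormula σ ar (V ⊕ Fin n)) (v : V → D),
      (exFin n φ).Sat S v ↔ ∃ w : Fin n → D, φ.Sat S (Sum.elim v w) := by
  intro V n
  induction n with
  | zero =>
    intro φ v
    rw [exFin, sat_rename]
    constructor
    · intro h
      refine ⟨Fin.elim0, sat_congr (fun x => ?_) h⟩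
      cases x with
      | inl x => rfl
      | inr i => exact i.elim0
    · rintro ⟨w, hw⟩
      refine sat_congr (fun x => ?_) hw
      cases x with
      | inl x => rfl
      | inr i => exact i.elim0
  | succ n ih =>
    intro φ v
    rw [exFin, ih]
    constructor
    · rintro ⟨w, d, hd⟩
      rw [sat_rename] at hd
      refine ⟨Fin.snoc w d, sat_congr (fun x => ?_) hd⟩
      cases x with
      | inl x => rfl
      | inr i =>
        refine Fin.lastCases ?_ (fun j => ?_) i
        · simp
        · simp
    · rintro ⟨w, hw⟩
      refine ⟨fun j => w j.castSucc, w (Fin.last n), ?_⟩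
      rw [sat_rename]
      refine sat_congr (fun x => ?_) hw
      cases x with
      | inl x => rfl
      | inr i =>
        refine Fin.lastCases ?_ (fun j => ?_) i
        · simp
        · simp

end PPFormula

end PPMachinery
section OrbitMachinery

variable {σ : Type} {ar : σ → ℕ} {D : Type}

/-- The orbit of a tuple under the automorphism group. -/
def orbitOf (S : RelStruct σ ar D) {n : ℕ} (t : Fin n → D) : Set (Fin n → D) :=
  { u | ∃ g : D ≃ D, IsAutomorphism S g ∧ (fun i => g (t i)) = u }

theorem isAutomorphism_refl (S : RelStruct σ ar D) : IsAutomorphism S (Equiv.refl D) :=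
  ⟨fun _ _ h => h, fun _ _ h => h⟩

theorem mem_orbitOf_self (S : RelStruct σ ar D) {n : ℕ} (t : Fin n → D) :
    t ∈ orbitOf S t :=
  ⟨Equiv.refl D, isAutomorphism_refl S, rfl⟩

theorem omega_cat_orbit_finite {S : RelStruct σ ar D} (hA : OmegaCategorical S) (n : ℕ) :
    Set.Finite { O : Set (Fin n → D) | ∃ t : Fin n → D, O = orbitOf S t } := hA n

/-- Satisfaction of pp-formulas is invariant along orbits. -/
theorem sat_of_mem_orbit {S : RelStruct σ ar D} {n : ℕ} {t u : Fin n → D}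
    (hu : u ∈ orbitOf S t) (φ : PPFormula σ ar (Fin n)) :
    φ.Sat S t ↔ φ.Sat S u := by
  obtain ⟨g, hg, hgu⟩ := hu
  constructor
  · intro h
    exact PPFormula.sat_congr (fun i => congrFun hgu i) (PPFormula.sat_hom hg.1 φ t h)
  · intro h
    have := PPFormula.sat_hom hg.2 φ u h
    refine PPFormula.sat_congr (fun i => ?_) this
    have : g.symm (u i) = t i := by
      rw [← congrFun hgu i]; exact g.symm_apply_apply (t i)
    exact this

/-- Key extension step: a point can be added to the target tuple preserving all
pp-facts, by a pigeonhole argument on orbits. -/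
theorem key_step (S : RelStruct σ ar D) (hA : OmegaCategorical S) (ℓ : ℕ)
    (vs : Fin (ℓ+1) → D) (wt : Fin ℓ → D)
    (hI : ∀ φ : PPFormula σ ar (Fin ℓ), φ.Sat S (fun i => vs i.castSucc) → φ.Sat S wt) :
    ∃ d : D, ∀ φ : PPFormula σ ar (Fin (ℓ+1)), φ.Sat S vs → φ.Sat S (Fin.snoc wt d) := by
  classical
  set Fact : PPFormula σ ar (Fin (ℓ+1)) → Prop := fun φ => φ.Sat S vs with hFact
  set Good : PPFormula σ ar (Fin (ℓ+1)) → Set (Fin (ℓ+1) → D) := fun φ =>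
    { u | (∀ i : Fin ℓ, u i.castSucc = wt i) ∧ φ.Sat S u } with hGoodDef
  have hGood : ∀ φ, Fact φ → ∃ u, u ∈ Good φ := by
    intro φ hφ
    have hsat : (PPFormula.ex (PPFormula.rename
        (fun i : Fin (ℓ+1) => Fin.lastCases none some i) φ)).Sat S (fun i => vs i.castSucc) := by
      refine ⟨vs (Fin.last ℓ), ?_⟩
      rw [PPFormula.sat_rename]
      refine PPFormula.sat_congr (fun i => ?_) hφ
      refine Fin.lastCases ?_ (fun j => ?_) i <;> simp
    have := hI _ hsat
    obtain ⟨d, hd⟩ := this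
    rw [PPFormula.sat_rename] at hd
    refine ⟨Fin.snoc wt d, fun i => by simp, ?_⟩
    refine PPFormula.sat_congr (fun i => ?_) hd
    refine Fin.lastCases ?_ (fun j => ?_) i <;> simp
  set Orbs : PPFormula σ ar (Fin (ℓ+1)) → Set (Set (Fin (ℓ+1) → D)) := fun φ =>
    { P | (∃ t, P = orbitOf S t) ∧ ∃ u ∈ Good φ, u ∈ P } with hOrbsDef
  have hOrbsFin : ∀ φ, (Orbs φ).Finite :=
    fun φ => (omega_cat_orbit_finite hA (ℓ+1)).subset (fun P hP => hP.1)
  have hOrbsNe : ∀ φ, Fact φ → (Orbs φ).Nonempty := by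
    intro φ hφ
    obtain ⟨u, hu⟩ := hGood φ hφ
    exact ⟨orbitOf S u, ⟨u, rfl⟩, u, hu, mem_orbitOf_self S u⟩
  set N : Set ℕ := { m | ∃ φ, Fact φ ∧ (Orbs φ).ncard = m } with hN
  have hNne : N.Nonempty := by
    refine ⟨(Orbs (PPFormula.eq 0 0)).ncard, PPFormula.eq 0 0, rfl, rfl⟩
  obtain ⟨φstar, hφstar, hcard⟩ := Nat.sInf_mem hNne
  have hmin : ∀ ψ, Fact ψ → Orbs φstar ⊆ Orbs ψ := by
    intro ψ hψ
    have hsub : Orbs (φstar.and ψ) ⊆ Orbs φstar := by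
      rintro P ⟨hP, u, hu, huP⟩
      exact ⟨hP, u, ⟨hu.1, hu.2.1⟩, huP⟩
    have hsub2 : Orbs (φstar.and ψ) ⊆ Orbs ψ := by
      rintro P ⟨hP, u, hu, huP⟩
      exact ⟨hP, u, ⟨hu.1, hu.2.2⟩, huP⟩
    have hfactand : Fact (φstar.and ψ) := ⟨hφstar, hψ⟩
    have hle : (Orbs φstar).ncard ≤ (Orbs (φstar.and ψ)).ncard := by
      rw [hcard]
      exact Nat.sInf_le ⟨_, hfactand, rfl⟩
    have := Set.eq_of_subset_of_ncard_le hsub hle (hOrbsFin _)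
    rw [← this]
    exact hsub2
  obtain ⟨ustar, hustar⟩ := hGood φstar hφstar
  refine ⟨ustar (Fin.last ℓ), ?_⟩
  have husnoc : Fin.snoc wt (ustar (Fin.last ℓ)) = ustar := by
    have hwt : wt = Fin.init ustar := funext fun j => (hustar.1 j).symm
    rw [hwt, Fin.snoc_init_self]
  rw [husnoc]
  intro ψ hψ
  have hPst : orbitOf S ustar ∈ Orbs φstar :=
    ⟨⟨ustar, rfl⟩, ustar, hustar, mem_orbitOf_self S ustar⟩
  have hPψ : orbitOf S ustar ∈ Orbs ψ := hmin ψ hψ hPst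
  obtain ⟨_, u', hu', hu'P⟩ := hPψ
  exact (sat_of_mem_orbit hu'P ψ).mpr hu'.2

end OrbitMachinery
section HomExtension

variable {σ : Type} {ar : σ → ℕ} {D : Type}

/-- The source tuples: `a` followed by an enumeration of the domain. -/
def vsq (a : D) (c : ℕ → D) (k : ℕ) : Fin (k+1) → D :=
  fun i => if i.val = 0 then a else c (i.val - 1)

/-- The sequence of target tuples, built by `key_step`. -/
noncomputable def Wseq (S : RelStruct σ ar D) (hA : OmegaCategorical S) (a b : D) (c : ℕ → D)
    (hab : ∀ φ : PPFormula σ ar (Fin 1), φ.Sat S (fun _ => a) → φ.Sat S (fun _ => b)) :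
    (k : ℕ) → { w : Fin (k+1) → D //
      ∀ φ : PPFormula σ ar (Fin (k+1)), φ.Sat S (vsq a c k) → φ.Sat S w }
  | 0 => ⟨fun _ => b, by
      intro φ h
      apply hab φ
      refine PPFormula.sat_congr (fun i => ?_) h
      have h0 : i.val = 0 := Nat.lt_one_iff.mp i.isLt
      simp [vsq, h0]⟩
  | k+1 =>
    ⟨Fin.snoc (Wseq S hA a b c hab k).1
        (Classical.choose (key_step S hA (k+1) (vsq a c (k+1)) (Wseq S hA a b c hab k).1
          (fun φ h => (Wseq S hA a b c hab k).2 φ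
            (PPFormula.sat_congr (fun i => rfl) h)))),
      Classical.choose_spec (key_step S hA (k+1) (vsq a c (k+1)) (Wseq S hA a b c hab k).1
          (fun φ h => (Wseq S hA a b c hab k).2 φ
            (PPFormula.sat_congr (fun i => rfl) h)))⟩

theorem Wseq_zero (S : RelStruct σ ar D) (hA : OmegaCategorical S) (a b : D) (c : ℕ → D)
    (hab : ∀ φ : PPFormula σ ar (Fin 1), φ.Sat S (fun _ => a) → φ.Sat S (fun _ => b)) :
    (Wseq S hA a b c hab 0).1 = fun _ => b := by
  simp [Wseq]

theorem Wseq_mono (S : RelStruct σ ar D) (hA : OmegaCategorical S) (a b : D) (c : ℕ → D)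
    (hab : ∀ φ : PPFormula σ ar (Fin 1), φ.Sat S (fun _ => a) → φ.Sat S (fun _ => b)) :
    ∀ (K k : ℕ), k ≤ K → ∀ (j : Fin (K+1)) (i : Fin (k+1)), j.val = i.val →
      (Wseq S hA a b c hab K).1 j = (Wseq S hA a b c hab k).1 i := by
  intro K
  induction K with
  | zero =>
    intro k h j i hji
    have hk : k = 0 := Nat.le_zero.mp h
    subst hk
    have : j = i := Fin.ext hji
    rw [this]
  | succ K ih =>
    intro k h j i hji
    rcases Nat.eq_or_lt_of_le h with heq | hlt
    · subst heq
      have : j = i := Fin.ext hji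
      rw [this]
    · have hkK : k ≤ K := by omega
      have hival : j.val < K + 1 := by have := i.isLt; omega
      have hcast : j = Fin.castSucc ⟨j.val, hival⟩ := Fin.ext rfl
      rw [show (Wseq S hA a b c hab (K+1)).1
          = Fin.snoc (Wseq S hA a b c hab K).1 _ from rfl, hcast, Fin.snoc_castSucc]
      exact ih k hkK _ i hji

/-- Main extension lemma: if `b` satisfies every pp-fact of `a`, then there is an
endomorphism mapping `a` to `b`. -/
theorem exists_endo_of_ppfacts (S : RelStruct σ ar D) (hcD : Countable D)
    (hA : OmegaCategorical S) (a b : D)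
    (hab : ∀ φ : PPFormula σ ar (Fin 1), φ.Sat S (fun _ => a) → φ.Sat S (fun _ => b)) :
    ∃ e : D → D, IsHomOf S S e ∧ e a = b := by
  classical
  have : Nonempty D := ⟨a⟩
  obtain ⟨c, hc⟩ := exists_surjective_nat D
  set ix : D → ℕ := fun x => Classical.choose (hc x) with hix
  have hixspec : ∀ x, c (ix x) = x := fun x => Classical.choose_spec (hc x)
  set e : D → D := fun x =>
    if x = a then b else (Wseq S hA a b c hab (ix x + 1)).1 (Fin.last (ix x + 1)) with he
  refine ⟨e, ?_, by simp [he]⟩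
  intro s t hrel
  set p : Fin (ar s) → ℕ := fun i => if t i = a then 0 else ix (t i) + 1 with hp
  set K : ℕ := Finset.univ.sup p with hK
  have hlt : ∀ i, p i < K + 1 := fun i =>
    Nat.lt_succ_of_le (Finset.le_sup (Finset.mem_univ i))
  set φ : PPFormula σ ar (Fin (K+1)) := .rel s (fun i => ⟨p i, hlt i⟩) with hφ
  have hsat : φ.Sat S (vsq a c K) := by
    show S.rel s (fun i => vsq a c K ⟨p i, hlt i⟩)
    have hfun : (fun i => vsq a c K ⟨p i, hlt i⟩) = t := by
      funext i
      by_cases hta : t i = a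
      · simp [vsq, hp, hta]
      · simp [vsq, hp, hta, hixspec]
    rw [hfun]
    exact hrel
  have hsat2 := (Wseq S hA a b c hab K).2 φ hsat
  have hfin : (fun i => (Wseq S hA a b c hab K).1 ⟨p i, hlt i⟩) = fun i => e (t i) := by
    funext i
    by_cases hta : t i = a
    · rw [Wseq_mono S hA a b c hab K 0 (Nat.zero_le K) ⟨p i, hlt i⟩ 0
        (by simp [hp, hta]), Wseq_zero]
      simp [he, hta]
    · have hpi : p i = ix (t i) + 1 := by simp [hp, hta]
      have hle : ix (t i) + 1 ≤ K := by
        have := hlt i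
        omega
      rw [Wseq_mono S hA a b c hab K (ix (t i) + 1) hle ⟨p i, hlt i⟩
        (Fin.last (ix (t i) + 1)) (by simp [hpi])]
      simp [he, hta]
  rw [← hfin]
  exact hsat2

/-- In a countable ω-categorical model-complete core, the orbit of an element is
pp-definable. -/
theorem orbit_ppDefinable (S : RelStruct σ ar D) (hcD : Countable D)
    (hA : OmegaCategorical S) (hmc : ModelCompleteCore S) (a : D) :
    ∃ φO : PPFormula σ ar (Fin 1),
      ∀ x : D, (∃ g : D ≃ D, IsAutomorphism S g ∧ g a = x) ↔ φO.Sat S (fun _ => x) := by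
  classical
  set O : Set D := { x | ∃ g : D ≃ D, IsAutomorphism S g ∧ g a = x } with hO
  have hOsat : ∀ x ∈ O, ∀ φ : PPFormula σ ar (Fin 1),
      φ.Sat S (fun _ => a) → φ.Sat S (fun _ => x) := by
    rintro x ⟨g, hg, hgx⟩ φ hφ
    have := PPFormula.sat_hom hg.1 φ (fun _ => a) hφ
    exact PPFormula.sat_congr (fun _ => hgx) this
  have hsatO : ∀ b : D, (∀ φ : PPFormula σ ar (Fin 1),
      φ.Sat S (fun _ => a) → φ.Sat S (fun _ => b)) → b ∈ O := by
    intro b hb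
    obtain ⟨e, hhom, hea⟩ := exists_endo_of_ppfacts S hcD hA a b hb
    obtain ⟨g, hg, hgea⟩ := hmc e hhom {a} (Set.finite_singleton a)
    exact ⟨g, hg, by rw [hgea a (Set.mem_singleton a), hea]⟩
  -- bad orbits: orbits of singletons not contained in O
  set Bad : Set (Set (Fin 1 → D)) :=
    { P | (∃ t, P = orbitOf S t) ∧ ∃ u ∈ P, u 0 ∉ O } with hBad
  have hBadFin : Bad.Finite :=
    (omega_cat_orbit_finite hA 1).subset (fun P hP => hP.1)
  -- for each bad orbit a separating formula
  have hsep : ∀ P ∈ Bad, ∃ φ : PPFormula σ ar (Fin 1),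
      φ.Sat S (fun _ => a) ∧ ∃ u ∈ P, ¬ φ.Sat S u := by
    rintro P ⟨hP, u, huP, huO⟩
    have : ¬ (∀ φ : PPFormula σ ar (Fin 1),
        φ.Sat S (fun _ => a) → φ.Sat S (fun _ => u 0)) := fun h => huO (hsatO _ h)
    push_neg at this
    obtain ⟨φ, hφa, hφu⟩ := this
    refine ⟨φ, hφa, u, huP, fun hsat => hφu ?_⟩
    refine PPFormula.sat_congr (fun i => ?_) hsat
    have : i = 0 := Subsingleton.elim i 0
    rw [this]
  set F : ∀ P ∈ Bad, PPFormula σ ar (Fin 1) := fun P hP => Classical.choose (hsep P hP)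
    with hF
  set l : List (PPFormula σ ar (Fin 1)) :=
    hBadFin.toFinset.attach.toList.map
      (fun P => F P.1 (hBadFin.mem_toFinset.mp P.2)) with hl
  refine ⟨PPFormula.listAnd (.eq 0 0) l, fun x => ?_⟩
  constructor
  · intro hx
    rw [PPFormula.sat_listAnd]
    refine ⟨rfl, fun φ hφ => ?_⟩
    simp only [hl, List.mem_map] at hφ
    obtain ⟨⟨P, hPmem⟩, _, hφeq⟩ := hφ
    have hspec := Classical.choose_spec (hsep P (hBadFin.mem_toFinset.mp hPmem))
    rw [← hφeq]
    exact hOsat x hx _ hspec.1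
  · intro hsat
    by_contra hxO
    have hmem : orbitOf S (fun _ : Fin 1 => x) ∈ Bad :=
      ⟨⟨_, rfl⟩, (fun _ => x), mem_orbitOf_self S _, hxO⟩
    have hmem' : (⟨orbitOf S (fun _ : Fin 1 => x), hBadFin.mem_toFinset.mpr hmem⟩ :
        {P // P ∈ hBadFin.toFinset}) ∈ hBadFin.toFinset.attach := Finset.mem_attach _ _
    have hφl : F _ hmem ∈ l := by
      simp only [hl, List.mem_map]
      refine ⟨⟨orbitOf S (fun _ : Fin 1 => x), hBadFin.mem_toFinset.mpr hmem⟩, ?_, rfl⟩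
      exact Finset.mem_toList.mpr (Finset.mem_attach _ _)
    rw [PPFormula.sat_listAnd] at hsat
    have hsatφ := hsat.2 _ hφl
    have hspec := Classical.choose_spec (hsep _ hmem)
    obtain ⟨_, u, huP, hnu⟩ := hspec
    exact hnu ((sat_of_mem_orbit huP _).mp hsatφ)
end HomExtension
section Translation

variable {σ : Type} {ar : σ → ℕ} {τ : Type} {br : τ → ℕ} {D C : Type}

/-- Translation of pp-formulas over `τ` into pp-formulas over `σ`, along a pp-power. -/
noncomputable def trPP (n : ℕ) (hn : 0 < n)
    (ψP : ∀ s : τ, PPFormula σ ar (Fin (br s) × Fin n)) :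
    {V : Type} → PPFormula τ br V → PPFormula σ ar (V × Fin n)
  | _, .rel s t => (ψP s).rename (fun p => (t p.1, p.2))
  | _, .eq x y => PPFormula.listAnd (.eq (x, ⟨0, hn⟩) (x, ⟨0, hn⟩))
      ((List.finRange n).map fun i => .eq (x, i) (y, i))
  | _, .and φ ψ => .and (trPP n hn ψP φ) (trPP n hn ψP ψ)
  | _, .ex φ => PPFormula.exFin n ((trPP n hn ψP φ).rename
      (fun p => match p.1 with
        | none => Sum.inr p.2
        | some x => Sum.inl (x, p.2)))

theorem sat_trPP (SA : RelStruct σ ar D) (P : RelStruct τ br C) (n : ℕ) (hn : 0 < n)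
    (e1 : C ≃ (Fin n → D)) (ψP : ∀ s : τ, PPFormula σ ar (Fin (br s) × Fin n))
    (hψP : ∀ (s : τ) (w : Fin (br s) × Fin n → D),
      P.rel s (fun j => e1.symm (fun i => w (j, i))) ↔ (ψP s).Sat SA w) :
    ∀ {V : Type} (φ : PPFormula τ br V) (v : V → C),
      φ.Sat P v ↔ (trPP n hn ψP φ).Sat SA (fun p => e1 (v p.1) p.2)
  | _, .rel s t, v => by
    have h1 := hψP s (fun p => e1 (v (t p.1)) p.2)
    have h2 : (fun j => e1.symm fun i => e1 (v (t j)) i) = fun j => v (t j) :=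
      funext fun j => e1.symm_apply_apply (v (t j))
    rw [h2] at h1
    show P.rel s (fun j => v (t j)) ↔ _
    rw [show trPP n hn ψP (.rel s t) = (ψP s).rename (fun p => (t p.1, p.2)) from rfl,
      PPFormula.sat_rename]
    exact h1.trans ⟨fun h => PPFormula.sat_congr (fun p => rfl) h,
      fun h => PPFormula.sat_congr (fun p => rfl) h⟩
  | _, .eq x y, v => by
    show v x = v y ↔ _
    rw [show trPP n hn ψP (.eq x y) = PPFormula.listAnd (.eq (x, ⟨0, hn⟩) (x, ⟨0, hn⟩))
      ((List.finRange n).map fun i => .eq (x, i) (y, i)) from rfl, PPFormula.sat_listAnd]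
    simp only [List.mem_map, List.mem_finRange, true_and]
    constructor
    · intro h
      refine ⟨rfl, ?_⟩
      rintro φ ⟨i, rfl⟩
      show e1 (v x) i = e1 (v y) i
      rw [h]
    · rintro ⟨-, h⟩
      have hi : ∀ i : Fin n, e1 (v x) i = e1 (v y) i := fun i => h _ ⟨i, rfl⟩
      exact e1.injective (funext hi)
  | _, .and φ ψ, v =>
    and_congr (sat_trPP SA P n hn e1 ψP hψP φ v) (sat_trPP SA P n hn e1 ψP hψP ψ v)
  | _, .ex φ, v => by
    show (∃ c : C, PPFormula.Sat P φ (fun o => Option.elim o c v)) ↔ _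
    rw [show trPP n hn ψP (.ex φ) = PPFormula.exFin n ((trPP n hn ψP φ).rename
      (fun p => match p.1 with
        | none => Sum.inr p.2
        | some x => Sum.inl (x, p.2))) from rfl, PPFormula.sat_exFin]
    constructor
    · rintro ⟨c, hc⟩
      refine ⟨e1 c, ?_⟩
      rw [PPFormula.sat_rename]
      have := (sat_trPP SA P n hn e1 ψP hψP φ (fun o => Option.elim o c v)).mp hc
      refine PPFormula.sat_congr (fun p => ?_) this
      obtain ⟨o, i⟩ := p
      cases o <;> rfl
    · rintro ⟨w, hw⟩
      rw [PPFormula.sat_rename] at hw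
      refine ⟨e1.symm w, ?_⟩
      rw [sat_trPP SA P n hn e1 ψP hψP φ]
      refine PPFormula.sat_congr (fun p => ?_) hw
      obtain ⟨o, i⟩ := p
      cases o
      · show w i = e1 (e1.symm w) i
        rw [e1.apply_symm_apply]
      · rfl

end Translation

section TransLemma

theorem isHomOf_comp {σ : Type} {ar : σ → ℕ} {D E F : Type}
    {SA : RelStruct σ ar D} {SB : RelStruct σ ar E} {SC : RelStruct σ ar F}
    {h : D → E} {h' : E → F} (h1 : IsHomOf SA SB h) (h2 : IsHomOf SB SC h') :
    IsHomOf SA SC (fun x => h' (h x)) :=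
  fun s t ht => h2 s _ (h1 s t ht)

theorem homEquiv_trans {σ : Type} {ar : σ → ℕ} {D E F : Type}
    {SA : RelStruct σ ar D} {SB : RelStruct σ ar E} {SC : RelStruct σ ar F}
    (h1 : HomEquiv SA SB) (h2 : HomEquiv SB SC) : HomEquiv SA SC := by
  obtain ⟨⟨f1, hf1⟩, ⟨g1, hg1⟩⟩ := h1
  obtain ⟨⟨f2, hf2⟩, ⟨g2, hg2⟩⟩ := h2
  exact ⟨⟨_, isHomOf_comp hf1 hf2⟩, ⟨_, isHomOf_comp hg2 hg1⟩⟩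

/-- Transitivity of "homomorphically equivalent to a pp-power". -/
theorem homEqPpPower_trans {σ τ υ : Type} {ar : σ → ℕ} {br : τ → ℕ} {cr : υ → ℕ}
    {D E F : Type} {SA : RelStruct σ ar D} {SB : RelStruct τ br E} {SC : RelStruct υ cr F}
    (h1 : HomEqPpPower SA SB) (h2 : HomEqPpPower SB SC) : HomEqPpPower SA SC := by
  classical
  obtain ⟨CP, P, ⟨n, hn, e1, hP⟩, ⟨⟨f1, hf1⟩, ⟨f2, hf2⟩⟩⟩ := h1
  obtain ⟨CQ, Q, ⟨m, hm, e2, hQ⟩, hCQ⟩ := h2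
  choose ψP hψP using hP
  choose ψQ hψQ using hQ
  -- the pp-power of `SA` on `Fin m → CP` corresponding to `Q`
  set Q' : RelStruct υ cr (Fin m → CP) :=
    ⟨fun s t => PPFormula.Sat P (ψQ s) (fun p => t p.1 p.2)⟩ with hQ'def
  refine ⟨Fin m → CP, Q', ?_, ?_⟩
  · -- Q' is a pp-power of SA, with exponent m * n
    set E2 : (Fin m → CP) ≃ (Fin (m * n) → D) :=
      { toFun := fun t i => e1 (t (finProdFinEquiv.symm i).1) (finProdFinEquiv.symm i).2
        invFun := fun w i2 => e1.symm (fun l => w (finProdFinEquiv (i2, l)))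
        left_inv := by intro t; funext i2; simp
        right_inv := by
          intro w
          funext i
          show e1 (e1.symm _) _ = w i
          rw [Equiv.apply_symm_apply]
          show w (finProdFinEquiv ((finProdFinEquiv.symm i).1,
            (finProdFinEquiv.symm i).2)) = w i
          rw [show ((finProdFinEquiv.symm i).1, (finProdFinEquiv.symm i).2)
            = finProdFinEquiv.symm i from rfl, Equiv.apply_symm_apply] } with hE2
    refine ⟨m * n, Nat.mul_pos hm hn, E2, fun s => ?_⟩
    refine ⟨(trPP n hn ψP (ψQ s)).rename
      (fun p => (p.1.1, finProdFinEquiv (p.1.2, p.2))), fun w => ?_⟩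
    show PPFormula.Sat P (ψQ s)
        (fun p => e1.symm (fun l => w (p.1, finProdFinEquiv (p.2, l)))) ↔ _
    rw [PPFormula.sat_rename, sat_trPP SA P n hn e1 ψP hψP (ψQ s)]
    constructor <;>
      (intro h; refine PPFormula.sat_congr (fun q => ?_) h; simp)
  · -- SC is hom-equivalent to Q'
    refine homEquiv_trans hCQ
      ⟨⟨fun q i => f1 (e2 q i), ?_⟩, ⟨fun t => e2.symm (fun i => f2 (t i)), ?_⟩⟩
    · intro s u hu
      show PPFormula.Sat P (ψQ s) _
      have heq : (fun j => e2.symm fun i => e2 (u j) i) = u :=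
        funext fun j => e2.symm_apply_apply (u j)
      have hv := (hψQ s (fun p => e2 (u p.1) p.2)).mp
        (show Q.rel s (fun j => e2.symm fun i => e2 (u j) i) from by rw [heq]; exact hu)
      have := PPFormula.sat_hom hf1 (ψQ s) _ hv
      exact PPFormula.sat_congr (fun p => rfl) this
    · intro s t ht
      have hsat : PPFormula.Sat P (ψQ s) (fun p => t p.1 p.2) := ht
      have := PPFormula.sat_hom hf2 (ψQ s) _ hsat
      exact (hψQ s _).mpr this

end TransLemma
section StepLemmas

theorem rel_transport {τ : Type} {br : τ → ℕ} {E : Type} (S : RelStruct τ br E)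
    {s s' : τ} (hss : s' = s) (t : Fin (br s') → E) (h : S.rel s' t) :
    S.rel s (fun i => t (Fin.cast (congrArg br hss.symm) i)) := by
  subst hss
  have : (fun i => t (Fin.cast (congrArg br rfl) i)) = t :=
    funext fun i => congrArg t (Fin.ext rfl)
  rw [this]
  exact h

/-- Every structure is hom-equivalent to a pp-power of itself. -/
theorem homEqPpPower_refl {σ : Type} {ar : σ → ℕ} {D : Type} (SA : RelStruct σ ar D) :
    HomEqPpPower SA SA := by
  refine ⟨Fin 1 → D, ⟨fun s t => SA.rel s (fun j => t j 0)⟩,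
    ⟨1, Nat.one_pos, Equiv.refl _, fun s => ⟨.rel s (fun j => (j, 0)), fun v => Iff.rfl⟩⟩,
    ⟨fun x _ => x, fun s t ht => ht⟩, ⟨fun t => t 0, fun s t ht => ht⟩⟩

/-- A pp-interpretation yields hom-equivalence with a pp-power. -/
theorem homEqPpPower_of_ppInterprets {σ τ : Type} {ar : σ → ℕ} {br : τ → ℕ}
    {D E : Type} {SA : RelStruct σ ar D} {SB : RelStruct τ br E}
    (hint : PpInterprets SA SB) : HomEqPpPower SA SB := by
  classical
  obtain ⟨n, hn, Dom, h, hsurj, hDom, hEq, hRel⟩ := hint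
  refine ⟨Fin n → D,
    ⟨fun s v => (∀ j, v j ∈ Dom) ∧ SB.rel s (fun j => h (v j))⟩,
    ⟨n, hn, Equiv.refl _, fun s => ?_⟩, ⟨?_, ?_⟩⟩
  · obtain ⟨φ, hφ⟩ := hRel s
    exact ⟨φ, fun v => hφ v⟩
  · choose sec hsec1 hsec2 using hsurj
    refine ⟨sec, fun s t ht => ⟨fun j => hsec1 (t j), ?_⟩⟩
    have heq : (fun j => h (sec (t j))) = t := funext fun j => hsec2 (t j)
    rw [heq]
    exact ht
  · exact ⟨fun v => h v, fun s t ht => ht.2⟩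

/-- A (bundled) hom-equivalence yields hom-equivalence with a pp-power. -/
theorem homEqPpPower_of_homEquivB (Bi Bj : BStr) (hh : BStr.HomEquivB Bi Bj) :
    HomEqPpPower Bi.str Bj.str := by
  classical
  obtain ⟨e, har, har', ⟨f, hf⟩, ⟨g, hg⟩⟩ := hh
  refine ⟨Fin 1 → Bi.D,
    ⟨fun s t => Bi.str.rel (e.symm s) (fun i => t (Fin.cast (har' s) i) 0)⟩,
    ⟨1, Nat.one_pos, Equiv.refl _, fun s =>
      ⟨.rel (e.symm s) (fun i => (Fin.cast (har' s) i, 0)), fun v => Iff.rfl⟩⟩,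
    ⟨fun x _ => g x, fun s t ht => hg s t ht⟩, ⟨fun t => f (t 0), ?_⟩⟩
  intro s t ht
  have h2 := hf (e.symm s) _ ht
  have h3 := rel_transport Bj.str (e.apply_symm_apply s) _ h2
  have hfun : (fun i => f
      (t (Fin.cast (har' s) (Fin.cast (har (e.symm s))
        (Fin.cast (congrArg Bj.ar (e.apply_symm_apply s).symm) i))) 0))
      = fun i => f (t i 0) :=
    funext fun i => congrArg (fun j => f (t j 0)) (Fin.ext rfl)
  rw [hfun] at h3
  exact h3

end StepLemmas
section SingletonStep

open PPFormula

/-- Adding a singleton unary relation to a countable ω-categorical model-complete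
core yields a structure hom-equivalent to a pp-power. -/
theorem homEqPpPower_of_addSingleton (Bi Bj : BStr) (hc : Countable Bi.D)
    (hA : OmegaCategorical Bi.str) (hmc : ModelCompleteCore Bi.str)
    (hadd : BStr.AddSingletonB Bi Bj) : HomEqPpPower Bi.str Bj.str := by
  classical
  obtain ⟨e, d, hars, har1, hold, s0, hnew⟩ := hadd
  set a : Bi.D := d.symm s0 with ha
  have hNe : Nonempty Bi.D := ⟨a⟩
  obtain ⟨φO, hφO⟩ := orbit_ppDefinable Bi.str hc hA hmc a
  have halpha : ∀ y : Bi.D, ∃ α : Bi.D ≃ Bi.D, IsAutomorphism Bi.str α ∧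
      ((∃ g : Bi.D ≃ Bi.D, IsAutomorphism Bi.str g ∧ g a = y) → α y = a) := by
    intro y
    by_cases hy : ∃ g : Bi.D ≃ Bi.D, IsAutomorphism Bi.str g ∧ g a = y
    · obtain ⟨g, hg, hga⟩ := hy
      refine ⟨g.symm, ⟨hg.2, ?_⟩, fun _ => by rw [← hga, Equiv.symm_apply_apply]⟩
      rw [Equiv.symm_symm]
      exact hg.1
    · exact ⟨Equiv.refl _, isAutomorphism_refl _, fun h => absurd h hy⟩
  choose α hα1 hα2 using halpha
  refine ⟨Fin 2 → Bi.D, ⟨fun s' t =>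
    (∃ (s : Bi.ι) (h : e (some s) = s'),
      (∀ i i', t i 1 = t i' 1) ∧
      Bi.str.rel s (fun i => t (Fin.cast ((hars s).symm.trans (congrArg Bj.ar h)) i) 0))
    ∨ (e none = s' ∧ ∀ i, t i 0 = t i 1 ∧ φO.Sat Bi.str (fun _ => t i 0))⟩,
    ⟨2, by norm_num, Equiv.refl _, fun s' => ?_⟩, ⟨?_, ?_⟩⟩
  · -- pp-definability of the relations
    obtain ⟨o, ho⟩ : ∃ o : Option Bi.ι, e o = s' := ⟨e.symm s', e.apply_symm_apply s'⟩
    cases o with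
    | some s =>
      refine ⟨PPFormula.and
        (listAnd (verum _) ((List.finRange (Bj.ar s')).map fun i =>
          listAnd (verum _) ((List.finRange (Bj.ar s')).map fun i' =>
            .eq (i, (1 : Fin 2)) (i', 1))))
        (.rel s (fun i =>
          (Fin.cast ((hars s).symm.trans (congrArg Bj.ar ho)) i, (0 : Fin 2)))),
        fun v => ?_⟩
      constructor
      · rintro (⟨s1, h1, hpair, hrel⟩ | ⟨hcon, -⟩)
        · have hs1 : s1 = s := Option.some.inj (e.injective (h1.trans ho.symm))
          subst hs1
          refine ⟨?_, ?_⟩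
          · rw [sat_listAnd]
            refine ⟨sat_verum _ hNe _, ?_⟩
            simp only [List.mem_map, List.mem_finRange, true_and]
            rintro ψ ⟨i, rfl⟩
            rw [sat_listAnd]
            refine ⟨sat_verum _ hNe _, ?_⟩
            simp only [List.mem_map, List.mem_finRange, true_and]
            rintro ψ ⟨i', rfl⟩
            exact hpair i i'
          · exact hrel
        · exact nomatch e.injective (hcon.trans ho.symm)
      · rintro ⟨hpair, hrel⟩
        refine Or.inl ⟨s, ho, ?_, hrel⟩
        intro i i'
        rw [sat_listAnd] at hpair
        have h1 := hpair.2 _ (List.mem_map.mpr ⟨i, List.mem_finRange i, rfl⟩)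
        rw [sat_listAnd] at h1
        exact h1.2 _ (List.mem_map.mpr ⟨i', List.mem_finRange i', rfl⟩)
    | none =>
      refine ⟨listAnd (verum _) ((List.finRange (Bj.ar s')).map fun i =>
        .and (.eq (i, (0 : Fin 2)) (i, 1)) (φO.rename (fun _ => (i, (0 : Fin 2))))),
        fun v => ?_⟩
      rw [sat_listAnd]
      constructor
      · rintro (⟨s1, h1, -, -⟩ | ⟨-, hall⟩)
        · exact nomatch e.injective (h1.trans ho.symm)
        · refine ⟨sat_verum _ hNe _, ?_⟩
          simp only [List.mem_map, List.mem_finRange, true_and]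
          rintro ψ ⟨i, rfl⟩
          refine ⟨(hall i).1, ?_⟩
          rw [sat_rename]
          exact (hall i).2
      · rintro ⟨-, hall⟩
        refine Or.inr ⟨ho, fun i => ?_⟩
        obtain ⟨h1, h2⟩ := hall _ (List.mem_map.mpr ⟨i, List.mem_finRange i, rfl⟩)
        rw [sat_rename] at h2
        exact ⟨h1, h2⟩
  · -- homomorphism from Bj into the pp-power
    refine ⟨fun x i => if i.val = 0 then d.symm x else a, ?_⟩
    intro s' t ht
    obtain ⟨o, ho⟩ : ∃ o : Option Bi.ι, e o = s' := ⟨e.symm s', e.apply_symm_apply s'⟩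
    subst ho
    cases o with
    | some s =>
      exact Or.inl ⟨s, rfl, fun i i' => rfl, (hold s t).mp ht⟩
    | none =>
      refine Or.inr ⟨rfl, fun i => ?_⟩
      have hts : t i = s0 := (hnew t).mp ht i
      constructor
      · show d.symm (t i) = a
        rw [hts, ha]
      · show φO.Sat Bi.str (fun _ => d.symm (t i))
        have : d.symm (t i) = a := by rw [hts, ha]
        rw [this]
        exact (hφO a).mp ⟨Equiv.refl _, isAutomorphism_refl _, rfl⟩
  · -- homomorphism from the pp-power to Bj
    refine ⟨fun t => d (α (t 1) (t 0)), ?_⟩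
    intro s' t ht
    rcases ht with ⟨s, h, hpair, hrel⟩ | ⟨h, hall⟩
    · subst h
      show Bj.str.rel (e (some s))
        (fun i => d (α (t i 1) (t i 0)))
      refine (hold s _).mpr ?_
      show Bi.str.rel s (fun i =>
        d.symm (d (α (t (Fin.cast (hars s).symm i) 1) (t (Fin.cast (hars s).symm i) 0))))
      set y₀ : Bi.D := if h5 : 0 < Bj.ar (e (some s)) then t ⟨0, h5⟩ 1 else a with hy₀
      have hrel2 := (hα1 y₀).1 s _ hrel
      have hfun : (fun i => d.symm (d (α (t (Fin.cast (hars s).symm i) 1)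
            (t (Fin.cast (hars s).symm i) 0))))
          = fun i => α y₀
            (t (Fin.cast ((hars s).symm.trans (congrArg Bj.ar (Eq.refl _))) i) 0) := by
        funext i
        rw [Equiv.symm_apply_apply]
        have h5 : 0 < Bj.ar (e (some s)) := (Fin.cast (hars s).symm i).pos
        have hy : t (Fin.cast (hars s).symm i) 1 = y₀ :=
          (hpair _ ⟨0, h5⟩).trans (hy₀.trans (dif_pos h5)).symm
        rw [hy]
      rw [hfun]
      exact hrel2
    · subst h
      show Bj.str.rel (e none) (fun i => d (α (t i 1) (t i 0)))
      refine (hnew _).mpr fun j => ?_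
      obtain ⟨h1, h2⟩ := hall j
      have horb : ∃ g : Bi.D ≃ Bi.D, IsAutomorphism Bi.str g ∧ g a = t j 0 :=
        (hφO _).mpr h2
      have hαa := hα2 (t j 0) horb
      show d (α (t j 1) (t j 0)) = s0
      rw [← h1, hαa, ha]
      exact d.apply_symm_apply s0

end SingletonStep
section Assembly

open PPFormula

theorem ppConstructible_to_homEqPpPower (A B : BStr) (h : BStr.PpConstructible A B) :
    HomEqPpPower A.str B.str := by
  obtain ⟨k, Cs, h0, hl, hstep⟩ := h
  have key : ∀ j : ℕ, ∀ hj : j < k + 1, HomEqPpPower A.str (Cs ⟨j, hj⟩).str := by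
    intro j
    induction j with
    | zero =>
      intro hj
      have hz : (⟨0, hj⟩ : Fin (k+1)) = 0 := Fin.ext (by simp)
      rw [hz, h0]
      exact homEqPpPower_refl _
    | succ j ih =>
      intro hj
      have hj' : j < k + 1 := by omega
      have hjk : j < k := by omega
      have hprev := ih hj'
      have hs := hstep ⟨j, hjk⟩
      have hc1 : (⟨j, hjk⟩ : Fin k).castSucc = ⟨j, hj'⟩ := Fin.ext rfl
      have hc2 : (⟨j, hjk⟩ : Fin k).succ = ⟨j+1, hj⟩ := Fin.ext rfl
      rw [hc1, hc2] at hs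
      rcases hs with hint | hhe | ⟨hcnt, homc, hmcc, hadd⟩
      · exact homEqPpPower_trans hprev (homEqPpPower_of_ppInterprets hint)
      · exact homEqPpPower_trans hprev (homEqPpPower_of_homEquivB _ _ hhe)
      · exact homEqPpPower_trans hprev
          (homEqPpPower_of_addSingleton _ _ hcnt homc hmcc hadd)
  have hfin := key k (Nat.lt_succ_self k)
  have hlast : (⟨k, Nat.lt_succ_self k⟩ : Fin (k+1)) = Fin.last k := Fin.ext rfl
  rw [hlast, hl] at hfin
  exact hfin

theorem homEqPpPower_to_ppConstructible (A B : BStr) (h : HomEqPpPower A.str B.str) :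
    BStr.PpConstructible A B := by
  classical
  obtain ⟨CD, SC, ⟨n, hn, e0, hpp⟩, hhe⟩ := h
  obtain ⟨⟨f, hf⟩, ⟨g, hg⟩⟩ := hhe
  set Cb : BStr := ⟨B.ι, B.ar, CD, SC⟩ with hCb
  refine ⟨2, ![A, Cb, B], rfl, rfl, ?_⟩
  intro i
  match i with
  | 0 =>
    show BStr.PpStep A Cb
    refine Or.inl ⟨n, hn, Set.univ, fun x => e0.symm x,
      fun b => ⟨e0 b, Set.mem_univ _, e0.symm_apply_apply b⟩, ?_, ?_, ?_⟩
    · exact ⟨verum _, fun v => iff_of_true (Set.mem_univ v)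
        (sat_verum _ ⟨v ⟨0, hn⟩⟩ v)⟩
    · refine ⟨listAnd (verum _) ((List.finRange n).map fun i =>
        .eq ((0 : Fin 2), i) ((1 : Fin 2), i)), fun v => ?_⟩
      rw [sat_listAnd]
      constructor
      · rintro ⟨-, -, heq⟩
        refine ⟨sat_verum _ ⟨v (0, ⟨0, hn⟩)⟩ _, ?_⟩
        simp only [List.mem_map, List.mem_finRange, true_and]
        rintro ψ ⟨i, rfl⟩
        show v (0, i) = v (1, i)
        have := e0.symm.injective heq
        exact congrFun this i
      · rintro ⟨-, hall⟩
        have hi : ∀ i : Fin n, v (0, i) = v (1, i) := fun i =>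
          hall _ (List.mem_map.mpr ⟨i, List.mem_finRange i, rfl⟩)
        exact ⟨Set.mem_univ _, Set.mem_univ _, congrArg _ (funext hi)⟩
    · intro s
      obtain ⟨φ, hφ⟩ := hpp s
      refine ⟨φ, fun v => ?_⟩
      constructor
      · rintro ⟨-, hrel⟩
        exact (hφ v).mp hrel
      · intro hsat
        exact ⟨fun j => Set.mem_univ _, (hφ v).mpr hsat⟩
  | 1 =>
    show BStr.PpStep Cb B
    refine Or.inr (Or.inl ⟨Equiv.refl B.ι, fun s => rfl, fun s => rfl,
      ⟨g, fun s t ht => hg s t ht⟩, ⟨f, fun s t ht => hf s t ht⟩⟩)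

theorem stmt8' (A B : BStr) :
    BStr.PpConstructible A B ↔ HomEqPpPower A.str B.str :=
  ⟨ppConstructible_to_homEqPpPower A B, homEqPpPower_to_ppConstructible A B⟩

end Assembly
/-- Corollary 3.7 of the paper. Let `A`, `B` be at most countable
ω-categorical relational structures. Then `B` can be pp-constructed from `A` iff `B`
is homomorphically equivalent to a pp-power of `A`. -/
theorem stmt8 (A B : BStr) (hcA : Countable A.D) (hcB : Countable B.D)
    (hA : OmegaCategorical A.str) (hB : OmegaCategorical B.str) :
    BStr.PpConstructible A B ↔ HomEqPpPower A.str B.str :=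
  stmt8' A B
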